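/- Under the same setup as the leave-one-out identity, the leave-one-out risk equals (1/(n(n−1))) Σ_{j ∈ 𝒥} [ Σ_{i=1}^n Ψ_j(x_i)² − (n/(n−1)) Σ_{i ≠ k} Ψ_j(x_i) Ψ_j(x_k) ]. -/

import Mathlib

lemma sum_quad {n : ℕ} (f : Fin n → ℝ) (a b c : ℝ) :
    ∑ i, (a + b * f i + c * (f i) ^ 2)
      = (n : ℝ) * a + b * ∑ i, f i + c * ∑ i, (f i) ^ 2 := by
  rw [Finset.sum_add_distrib, Finset.sum_add_distrib, Finset.sum_const,
    ← Finset.mul_sum, ← Finset.mul_sum]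
  simp [Finset.card_univ, nsmul_eq_mul]

theorem loo_risk_second_expression {J : Type*} [Fintype J]
    (n : ℕ) (hn : 2 ≤ n) (P : J → Fin n → ℝ)
    (Cm : Fin n → J → ℝ)
    (hCm : ∀ i j, Cm i j = (1 / ((n : ℝ) - 1)) * ∑ k ∈ Finset.univ.erase i, P j k) :
    (1 / (n : ℝ)) * ∑ i, ((∑ j, (Cm i j) ^ 2) - 2 * ∑ j, Cm i j * P j i)
      = (1 / ((n : ℝ) * ((n : ℝ) - 1)))
        * ∑ j, ((∑ i, (P j i) ^ 2)
            - ((n : ℝ) / ((n : ℝ) - 1))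
              * ∑ i, ∑ k ∈ Finset.univ.erase i, P j i * P j k) := by
  have h2 : (2 : ℝ) ≤ (n : ℝ) := by exact_mod_cast hn
  have hn1 : (n : ℝ) - 1 ≠ 0 := by intro h; linarith
  have hn0 : (n : ℝ) ≠ 0 := by intro h; linarith
  simp only [hCm, Finset.sum_erase_eq_sub (Finset.mem_univ _), ← Finset.mul_sum]
  -- set notation
  set S : J → ℝ := fun j => ∑ i, P j i with hS
  set Q : J → ℝ := fun j => ∑ i, (P j i) ^ 2 with hQ
  -- LHS: combine the two sums over j, then swap order
  have lhs_eq :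
      ∑ i, ((∑ j, (1 / ((n:ℝ) - 1) * (S j - P j i)) ^ 2)
        - 2 * ∑ j, (1 / ((n:ℝ) - 1) * (S j - P j i)) * P j i)
      = ∑ j, ∑ i, ((1 / ((n:ℝ) - 1) * (S j - P j i)) ^ 2
          - 2 * ((1 / ((n:ℝ) - 1) * (S j - P j i)) * P j i)) := by
    rw [← Finset.sum_comm]
    refine Finset.sum_congr rfl fun i _ => ?_
    rw [Finset.mul_sum, ← Finset.sum_sub_distrib]
  rw [lhs_eq, Finset.mul_sum, Finset.mul_sum]
  refine Finset.sum_congr rfl fun j _ => ?_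
  have e1 : ∑ i, ((1 / ((n:ℝ) - 1) * (S j - P j i)) ^ 2
      - 2 * ((1 / ((n:ℝ) - 1) * (S j - P j i)) * P j i))
      = (n : ℝ) * ((1 / ((n:ℝ) - 1)) ^ 2 * (S j) ^ 2)
        + (-2 * (1 / ((n:ℝ) - 1)) ^ 2 * S j - 2 * (1 / ((n:ℝ) - 1)) * S j) * S j
        + ((1 / ((n:ℝ) - 1)) ^ 2 + 2 * (1 / ((n:ℝ) - 1))) * Q j := by
    rw [show (fun i => ((1 / ((n:ℝ) - 1) * (S j - P j i)) ^ 2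
        - 2 * ((1 / ((n:ℝ) - 1) * (S j - P j i)) * P j i)))
      = (fun i => ((1 / ((n:ℝ) - 1)) ^ 2 * (S j) ^ 2
        + (-2 * (1 / ((n:ℝ) - 1)) ^ 2 * S j - 2 * (1 / ((n:ℝ) - 1)) * S j) * P j i
        + ((1 / ((n:ℝ) - 1)) ^ 2 + 2 * (1 / ((n:ℝ) - 1))) * (P j i) ^ 2))
      from funext fun i => by ring]
    exact sum_quad (P j) _ _ _
  have e2 : ∑ i, (P j i * S j - P j i * P j i)
      = (n : ℝ) * 0 + S j * S j + (-1) * Q j := by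
    rw [show (fun i => (P j i * S j - P j i * P j i))
      = (fun i => (0 + S j * P j i + (-1) * (P j i) ^ 2)) from funext fun i => by ring]
    exact sum_quad (P j) _ _ _
  rw [e1, e2]
  field_simp
  ring
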